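/- Fix m ≥ 0. The map (E,F,G) ↦ (F,G,E⁻), where E⁻ is obtained from E by subtracting 1 from every entry, is a bijection from Type 1 Dyck triples of height m to Type 2 Dyck triples of height m, and it preserves the triple statistics: area(E ⧺ F ⧺ G) = area(F ⧺ G ⧺ E⁻) + len(E⁻) and dinv(E ⧺ F ⧺ G) − len(E) = dinv(F ⧺ G ⧺ E⁻) − len(E⁻), where ⧺ denotes concatenation. -/

import Mathlib

/-- A finite integer sequence is an *affine Dyck sequence* if each entry is at
most the previous entry plus 1. -/
def AffineDyck (x : List ℤ) : Prop := List.Chain' (fun a b => b ≤ a + 1) x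

/-- A finite integer sequence is a *reverse Dyck sequence* if each entry is at
least the previous entry minus 1. -/
def ReverseDyck (x : List ℤ) : Prop := List.Chain' (fun a b => a - 1 ≤ b) x

/-- An *ordinary Dyck sequence* is a nonempty affine Dyck sequence starting at
`0` with all entries nonnegative. -/
def OrdDyck (x : List ℤ) : Prop :=
  x ≠ [] ∧ AffineDyck x ∧ x.getD 0 0 = 0 ∧ ∀ a ∈ x, 0 ≤ a

/-- An index `j` of `C` is *eligible* if there is exactly one index `i < j`
with `C i = C j − 1`, and either `j` is the final index or the next entry is
at most `C j`. -/
def Eligible (C : List ℤ) (j : ℕ) : Prop :=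
  j < C.length ∧
  ((Finset.range j).filter (fun i => C.getD i 0 = C.getD j 0 - 1)).card = 1 ∧
  (j + 1 = C.length ∨ C.getD (j + 1) 0 ≤ C.getD j 0)

/-- A *Dyck `m`-skeleton*. -/
def DyckSkeleton (m : ℤ) (F : List ℤ) : Prop :=
  OrdDyck F ∧ (∀ a ∈ F, a ≤ m) ∧ F.getLast? = some m ∧
  ∀ j, Eligible F j → j + 1 = F.length

/-- A *Type 1 Dyck triple of height `m`*: `F` a Dyck `m`-skeleton, `E` a
reverse `[1, m]` Dyck sequence, `G` an affine `[0, m−1]` Dyck sequence. -/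
def Type1 (m : ℤ) (E F G : List ℤ) : Prop :=
  DyckSkeleton m F ∧
  ReverseDyck E ∧ (∀ a ∈ E, 1 ≤ a ∧ a ≤ m) ∧
  AffineDyck G ∧ (∀ a ∈ G, 0 ≤ a ∧ a ≤ m - 1)

/-- A *Type 2 Dyck triple of height `m`*: `F` a Dyck `m`-skeleton, `G` an
affine `[0, m−1]` Dyck sequence, `E` a reverse `[0, m−1]` Dyck sequence. -/
def Type2 (m : ℤ) (F G E : List ℤ) : Prop :=
  DyckSkeleton m F ∧
  AffineDyck G ∧ (∀ a ∈ G, 0 ≤ a ∧ a ≤ m - 1) ∧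
  ReverseDyck E ∧ (∀ a ∈ E, 0 ≤ a ∧ a ≤ m - 1)

/-- `di x` is the number of pairs `i < j` with `x i = x j + 1`. -/
def di (x : List ℤ) : ℕ :=
  ((Finset.range x.length ×ˢ Finset.range x.length).filter
    (fun p => p.1 < p.2 ∧ x.getD p.1 0 = x.getD p.2 0 + 1)).card

/-- `nv x` is the number of pairs `i < j` with `x i = x j`. -/
def nv (x : List ℤ) : ℕ :=
  ((Finset.range x.length ×ˢ Finset.range x.length).filter
    (fun p => p.1 < p.2 ∧ x.getD p.1 0 = x.getD p.2 0)).card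

/-- `dinv x = di x + nv x`. -/
def dinv (x : List ℤ) : ℕ := di x + nv x

/-- `area x` is the sum of the entries of `x`. -/
def area (x : List ℤ) : ℤ := x.sum


section Aux

private lemma sum_map_sub_one (E : List ℤ) :
    (E.map (fun a => a - 1)).sum = E.sum - E.length := by
  induction E with
  | nil => simp
  | cons a t ih => simp [ih]; ring

/-- The combined dinv set. -/
private def dset (x : List ℤ) : Finset (ℕ × ℕ) :=
  (Finset.range x.length ×ˢ Finset.range x.length).filter
    (fun p => p.1 < p.2 ∧ (x.getD p.1 0 = x.getD p.2 0 + 1 ∨ x.getD p.1 0 = x.getD p.2 0))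

private lemma dinv_eq_card (x : List ℤ) : dinv x = (dset x).card := by
  classical
  rw [dinv, di, nv, ← Finset.card_union_of_disjoint, ← Finset.filter_or, dset]
  · congr 1
    apply Finset.filter_congr
    intro p _
    tauto
  · rw [Finset.disjoint_left]
    rintro ⟨i, j⟩ h1 h2
    simp only [Finset.mem_filter] at h1 h2
    omega

private lemma dinv_rotate (E A : List ℤ) :
    dinv (E ++ A) = dinv (A ++ E.map (fun a => a - 1)) := by
  classical
  rw [dinv_eq_card, dinv_eq_card, dset, dset]
  have hlenX : (E ++ A).length = E.length + A.length := by simp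
  have hlenY : (A ++ E.map (fun a => a - 1)).length = A.length + E.length := by simp
  have hXE : ∀ i, i < E.length → (E ++ A).getD i 0 = E.getD i 0 := by
    intro i h
    rw [List.getD_eq_getElem _ _ (by simp; omega), List.getD_eq_getElem _ _ h,
      List.getElem_append_left h]
  have hXA : ∀ i, E.length ≤ i → i < E.length + A.length →
      (E ++ A).getD i 0 = A.getD (i - E.length) 0 := by
    intro i h1 h2
    rw [List.getD_eq_getElem _ _ (by simp; omega),
      List.getD_eq_getElem _ _ (by omega : i - E.length < A.length),
      List.getElem_append_right h1]
  have hYA : ∀ k, k < A.length → (A ++ E.map (fun a => a - 1)).getD k 0 = A.getD k 0 := by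
    intro k h
    rw [List.getD_eq_getElem _ _ (by simp; omega), List.getD_eq_getElem _ _ h,
      List.getElem_append_left h]
  have hYE : ∀ i, i < E.length →
      (A ++ E.map (fun a => a - 1)).getD (i + A.length) 0 = E.getD i 0 - 1 := by
    intro i h
    rw [List.getD_eq_getElem _ _ (by simp; omega), List.getD_eq_getElem _ _ h,
      List.getElem_append_right (by omega : A.length ≤ i + A.length)]
    have : i + A.length - A.length = i := by omega
    simp [this]
  apply Finset.card_bij'
    (fun x _ => if x.2 < E.length then (x.1 + A.length, x.2 + A.length)
                else if x.1 < E.length then (x.2 - E.length, x.1 + A.length)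
                else (x.1 - E.length, x.2 - E.length))
    (fun y _ => if y.2 < A.length then (y.1 + E.length, y.2 + E.length)
                else if y.1 < A.length then (y.2 - A.length, y.1 + E.length)
                else (y.1 - A.length, y.2 - A.length))
  · rintro ⟨i, j⟩ h
    simp only [Finset.mem_filter, Finset.mem_product, Finset.mem_range, hlenX, hlenY] at h ⊢
    obtain ⟨⟨hi, hj⟩, hij, hcond⟩ := h
    split_ifs with h1 h2
    · -- both in E
      refine ⟨⟨by omega, by omega⟩, by omega, ?_⟩
      rw [hYE i (by omega), hYE j (by omega)]
      rw [hXE i (by omega), hXE j (by omega)] at hcond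
      omega
    · -- cross: i in E, j in A
      refine ⟨⟨by omega, by omega⟩, by omega, ?_⟩
      rw [hYA (j - E.length) (by omega), hYE i (by omega)]
      rw [hXE i (by omega), hXA j (by omega) (by omega)] at hcond
      omega
    · -- both in A
      refine ⟨⟨by omega, by omega⟩, by omega, ?_⟩
      rw [hYA (i - E.length) (by omega), hYA (j - E.length) (by omega)]
      rw [hXA i (by omega) (by omega), hXA j (by omega) (by omega)] at hcond
      omega
  · rintro ⟨k, l⟩ h
    simp only [Finset.mem_filter, Finset.mem_product, Finset.mem_range, hlenX, hlenY] at h ⊢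
    obtain ⟨⟨hk, hl⟩, hkl, hcond⟩ := h
    split_ifs with h1 h2
    · -- both in A
      refine ⟨⟨by omega, by omega⟩, by omega, ?_⟩
      rw [hXA (k + E.length) (by omega) (by omega), hXA (l + E.length) (by omega) (by omega)]
      rw [hYA k (by omega), hYA l (by omega)] at hcond
      have e1 : k + E.length - E.length = k := by omega
      have e2 : l + E.length - E.length = l := by omega
      rw [e1, e2]
      omega
    · -- cross: k in A, l in E-part
      refine ⟨⟨by omega, by omega⟩, by omega, ?_⟩
      rw [hXE (l - A.length) (by omega), hXA (k + E.length) (by omega) (by omega)]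
      have e1 : k + E.length - E.length = k := by omega
      rw [e1]
      have e2 : l = (l - A.length) + A.length := by omega
      rw [hYA k (by omega)] at hcond
      rw [e2, hYE (l - A.length) (by omega)] at hcond
      omega
    · -- both in E-part
      refine ⟨⟨by omega, by omega⟩, by omega, ?_⟩
      rw [hXE (k - A.length) (by omega), hXE (l - A.length) (by omega)]
      have e1 : k = (k - A.length) + A.length := by omega
      have e2 : l = (l - A.length) + A.length := by omega
      rw [e1, e2, hYE (k - A.length) (by omega), hYE (l - A.length) (by omega)] at hcond
      omega
  · rintro ⟨i, j⟩ h
    simp only [Finset.mem_filter, Finset.mem_product, Finset.mem_range, hlenX] at h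
    obtain ⟨⟨hi, hj⟩, hij, -⟩ := h
    split_ifs <;> simp_all [Prod.ext_iff] <;> omega
  · rintro ⟨k, l⟩ h
    simp only [Finset.mem_filter, Finset.mem_product, Finset.mem_range, hlenY] at h
    obtain ⟨⟨hk, hl⟩, hkl, -⟩ := h
    split_ifs <;> simp_all [Prod.ext_iff] <;> omega

end Aux

/-- **The Type 1–Type 2 shift.**  Fix `m ≥ 0`.  The map
`(E, F, G) ↦ (F, G, E⁻)`, with `E⁻` obtained by subtracting `1` from each
entry of `E`, is a bijection from Type 1 Dyck triples of height `m` to Type 2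
Dyck triples of height `m`, and it preserves the triple statistics. -/
theorem type1_type2_shift (m : ℤ) (hm : 0 ≤ m) :
    (∀ E F G : List ℤ, Type1 m E F G → Type2 m F G (E.map (· - 1))) ∧
    (∀ F G H : List ℤ, Type2 m F G H →
      ∃! E : List ℤ,
        Type1 m E F G ∧ E.map (· - 1) = H) ∧
    (∀ E F G : List ℤ, Type1 m E F G →
      area (E ++ F ++ G) =
        area (F ++ G ++ E.map (· - 1)) + (E.map (· - 1)).length ∧
      dinv (E ++ F ++ G) + (E.map (· - 1)).length =
        dinv (F ++ G ++ E.map (· - 1)) + E.length) := by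
  constructor
  · rintro E F G ⟨hF, hE, hEb, hG, hGb⟩
    refine ⟨hF, hG, hGb, ?_, ?_⟩
    · rw [ReverseDyck, List.Chain', List.isChain_map]
      exact hE.imp (fun a b hab => by omega)
    · intro a ha
      simp only [List.mem_map] at ha
      obtain ⟨b, hb, rfl⟩ := ha
      have := hEb b hb
      omega
  constructor
  · rintro F G H ⟨hF, hG, hGb, hH, hHb⟩
    refine ⟨H.map (fun a => a + 1), ⟨⟨hF, ?_, ?_, hG, hGb⟩, ?_⟩, ?_⟩
    · rw [ReverseDyck, List.Chain', List.isChain_map]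
      exact hH.imp (fun a b hab => by omega)
    · intro a ha
      simp only [List.mem_map] at ha
      obtain ⟨b, hb, rfl⟩ := ha
      have := hHb b hb
      omega
    · rw [List.map_map]
      have : ((· - 1) ∘ fun (a : ℤ) => a + 1) = id := by funext a; simp
      rw [this, List.map_id]
    · rintro E' ⟨-, hE'⟩
      rw [← hE', List.map_map]
      have : ((fun (a : ℤ) => a + 1) ∘ (· - 1)) = id := by funext a; simp
      rw [this, List.map_id]
  · rintro E F G ⟨hF, hE, hEb, hG, hGb⟩
    constructor
    · simp only [area, List.sum_append, sum_map_sub_one, List.length_map]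
      ring
    · rw [List.append_assoc, dinv_rotate]
      simp
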